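/- Let m ≥ 0, and let n, e, h, a be positive integers with 3^{m+1} ≤ n < 2·3^{m+1}, e < 3^h, and h ≥ m+2. Then p(3^h·a + n, e) ≡ p(n,e) (mod 3), where p(n,e) = Σ_{i=0}^{e} 2i² k(n−1, e−i). -/
import Mathlib


/-- The cardinality of the `n`-dimensional Lee ball of radius `e`. -/
def leeK (n e : ℕ) : ℕ := ∑ i ∈ Finset.range (min n e + 1), 2 ^ i * n.choose i * e.choose i

/-- `p(n,e) = Σ_{i=0}^{e} 2 i² k(n−1, e−i)`. -/
def leeP (n e : ℕ) : ℕ := ∑ i ∈ Finset.range (e + 1), 2 * i ^ 2 * leeK (n - 1) (e - i)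

private instance : Fact (Nat.Prime 3) := ⟨by norm_num⟩

/-- Congruence of sums mod n from termwise congruence. -/
lemma sum_modEq {α : Type*} (s : Finset α) (n : ℕ) (f g : α → ℕ)
    (h : ∀ i ∈ s, f i ≡ g i [MOD n]) : (∑ i ∈ s, f i) ≡ ∑ i ∈ s, g i [MOD n] := by
  unfold Nat.ModEq
  rw [Finset.sum_nat_mod, Finset.sum_nat_mod _ _ g]
  congr 1
  exact Finset.sum_congr rfl h

/-- `leeK` as a sum over `range (e+1)` (extra terms vanish). -/
lemma leeK_eq_sum_range (n e : ℕ) :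
    leeK n e = ∑ i ∈ Finset.range (e + 1), 2 ^ i * n.choose i * e.choose i := by
  rcases le_or_gt e n with hle | hlt
  · rw [leeK, min_eq_right hle]
  · rw [leeK, min_eq_left hlt.le]
    refine Finset.sum_subset (Finset.range_subset_range.2 (by omega)) ?_
    intro i hi hni
    simp only [Finset.mem_range] at hi hni
    rw [Nat.choose_eq_zero_of_lt (by omega : n < i)]
    ring

/-- Key Lucas congruence: adding a multiple of `3^h` doesn't change binomials mod 3
for lower indices below `3^h`. -/
lemma choose_add_pow_modEq (h a N i : ℕ) (hN : N < 3 ^ h) (hi : i < 3 ^ h) :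
    (3 ^ h * a + N).choose i ≡ N.choose i [MOD 3] := by
  rw [← Int.natCast_modEq_iff]
  have h1 := @Choose.choose_modEq_choose_mul_prod_range_choose (3 ^ h * a + N) i 3 _ h
  have h2 := @Choose.choose_modEq_choose_mul_prod_range_choose N i 3 _ h
  have hdiv : ∀ j < h, (3 ^ h * a + N) / 3 ^ j % 3 = N / 3 ^ j % 3 := by
    intro j hj
    have heq : 3 ^ h * a = 3 ^ j * (3 ^ (h - j) * a) := by
      rw [← mul_assoc, ← pow_add]; congr 2; omega
    rw [heq, Nat.mul_add_div (by positivity)]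
    have heq2 : 3 ^ (h - j) * a = 3 * (3 ^ (h - j - 1) * a) := by
      rw [← mul_assoc, ← pow_succ']; congr 2; omega
    omega
  have hNd : N / 3 ^ h = 0 := Nat.div_eq_of_lt hN
  have hid : i / 3 ^ h = 0 := Nat.div_eq_of_lt hi
  have hnd : (3 ^ h * a + N) / 3 ^ h = a := by
    rw [Nat.mul_comm, Nat.add_comm, Nat.add_mul_div_right _ _ (by positivity), hNd, Nat.zero_add]
  rw [hnd, hid, Nat.choose_zero_right, Nat.cast_one, one_mul] at h1
  rw [hNd, hid, Nat.choose_zero_right, Nat.cast_one, one_mul] at h2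
  have hprod : (∏ j ∈ Finset.range h,
        ((3 ^ h * a + N) / 3 ^ j % 3).choose (i / 3 ^ j % 3))
      = ∏ j ∈ Finset.range h, (N / 3 ^ j % 3).choose (i / 3 ^ j % 3) := by
    refine Finset.prod_congr rfl fun j hj => ?_
    rw [hdiv j (Finset.mem_range.mp hj)]
  rw [hprod] at h1
  exact h1.trans h2.symm

lemma leeK_modEq (h a N j : ℕ) (hN : N < 3 ^ h) (hj : j < 3 ^ h) :
    leeK (3 ^ h * a + N) j ≡ leeK N j [MOD 3] := by
  rw [leeK_eq_sum_range, leeK_eq_sum_range]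
  refine sum_modEq _ _ _ _ fun i hi => ?_
  have hi' : i < 3 ^ h := by
    have := Finset.mem_range.mp hi; omega
  exact Nat.ModEq.mul_right _ (Nat.ModEq.mul_left _ (choose_add_pow_modEq h a N i hN hi'))

theorem leeP_periodicity_mod_three (m n e h a : ℕ) (hn : 0 < n) (he : 0 < e)
    (hh0 : 0 < h) (ha : 0 < a) (hn1 : 3 ^ (m + 1) ≤ n) (hn2 : n < 2 * 3 ^ (m + 1))
    (helt : e < 3 ^ h) (hh : m + 2 ≤ h) :
    leeP (3 ^ h * a + n) e ≡ leeP n e [MOD 3] := by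
  have hNlt : n - 1 < 3 ^ h := by
    have h2 : (2 : ℕ) * 3 ^ (m + 1) ≤ 3 ^ (m + 2) := by
      have : (3:ℕ) ^ (m + 2) = 3 * 3 ^ (m + 1) := by ring
      omega
    have h3 : (3 : ℕ) ^ (m + 2) ≤ 3 ^ h := Nat.pow_le_pow_right (by norm_num) hh
    omega
  have hsub : 3 ^ h * a + n - 1 = 3 ^ h * a + (n - 1) := by omega
  rw [leeP, leeP, hsub]
  refine sum_modEq _ _ _ _ fun i hi => ?_
  exact Nat.ModEq.mul_left _ (leeK_modEq h a (n - 1) (e - i) hNlt (by omega))
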